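/- Suppose for all x ∈ X the identity R(x) + μ·p_O(x) = λ·p_I(x) holds for some real constants μ, λ. Then for every selective function c with φ(c) > 0, the selective risk satisfies R^S(h,c) = λ − μ·ρ(c)/φ(c). Consequently, if μ < 0, minimizing R^S(h,c) subject to φ(c) ≥ φ_min and ρ(c) ≤ ρ_max is equivalent to minimizing the ratio ρ(c)/φ(c) subject to the same constraints; if μ > 0, it is equivalent to maximizing ρ(c)/φ(c). -/
import Mathlib


/-- If R(x) + μ·p_O(x) = λ·p_I(x) for all x, then R^S(h,c) = λ − μ·ρ(c)/φ(c);
consequently the bounded TPR-FPR problem reduces to minimizing (μ < 0) or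
maximizing (μ > 0) the ratio ρ(c)/φ(c). -/
theorem selective_risk_linear_reduction {X : Type*} [Fintype X]
    (pI pO R : X → ℝ) (hR : ∀ x, 0 ≤ R x)
    (μ lam φmin ρmax : ℝ) (hφmin : 0 < φmin)
    (hid : ∀ x, R x + μ * pO x = lam * pI x)
    (φ ρ : (X → ℝ) → ℝ)
    (hφ : ∀ c, φ c = ∑ x : X, pI x * c x)
    (hρ : ∀ c, ρ c = ∑ x : X, pO x * c x)
    (RS : (X → ℝ) → ℝ)
    (hRS : ∀ c, RS c = (∑ x : X, R x * c x) / φ c)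
    (feasible : (X → ℝ) → Prop)
    (hfeas : ∀ c, feasible c ↔ (∀ x, 0 ≤ c x ∧ c x ≤ 1) ∧
      φmin ≤ φ c ∧ ρ c ≤ ρmax) :
    (∀ c, feasible c → RS c = lam - μ * (ρ c / φ c)) ∧
    (μ < 0 → ∀ c, feasible c →
      ((∀ c', feasible c' → RS c ≤ RS c') ↔
        (∀ c', feasible c' → ρ c / φ c ≤ ρ c' / φ c'))) ∧
    (0 < μ → ∀ c, feasible c →
      ((∀ c', feasible c' → RS c ≤ RS c') ↔
        (∀ c', feasible c' → ρ c' / φ c' ≤ ρ c / φ c))) := by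
  have hpos : ∀ c, feasible c → 0 < φ c := by
    intro c hc
    exact lt_of_lt_of_le hφmin ((hfeas c).1 hc).2.1
  have key : ∀ c, feasible c → RS c = lam - μ * (ρ c / φ c) := by
    intro c hc
    have hφc := hpos c hc
    have hsum : (∑ x : X, R x * c x) = lam * φ c - μ * ρ c := by
      rw [hφ, hρ, Finset.mul_sum, Finset.mul_sum, ← Finset.sum_sub_distrib]
      refine Finset.sum_congr rfl fun x _ => ?_
      linear_combination c x * hid x
    rw [hRS, hsum]
    field_simp
  refine ⟨key, ?_, ?_⟩
  · intro hμ c hc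
    constructor
    · intro h c' hc'
      have := h c' hc'
      rw [key c hc, key c' hc'] at this
      nlinarith
    · intro h c' hc'
      have := h c' hc'
      rw [key c hc, key c' hc']
      nlinarith
  · intro hμ c hc
    constructor
    · intro h c' hc'
      have := h c' hc'
      rw [key c hc, key c' hc'] at this
      nlinarith
    · intro h c' hc'
      have := h c' hc'
      rw [key c hc, key c' hc']
      nlinarith
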